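/- arXiv:1202.1223 — 6 statements merged into one kernel-verified Lean document; each statement's English description precedes it below -/
import Mathlib

section
/- For a rooted phylogenetic tree T with n leaves and root r, the total cophenetic index Φ(T) = Σ_{1≤i<j≤n} δ_T(LCA_T(i,j)) equals the sum over all internal nodes v other than the root of binom(κ_T(v), 2), where κ_T(v) is the number of leaves descended from v. -/
/-- Rooted trees with natural-number-labeled leaves. -/
inductive PTree where
  | leaf : ℕ → PTree
  | node : List PTree → PTree

namespace PTree

/-- The list of leaf labels of a tree, in left-to-right order. -/
def leaves : PTree → List ℕ
  | .leaf i => [i]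
  | .node ts => ts.attach.flatMap (fun t => leaves t.1)
decreasing_by have := List.sizeOf_lt_of_mem t.2; simp_wf; omega

/-- The depth (number of arcs from the root) of the leaf labeled `i`. -/
def leafDepth : PTree → ℕ → ℕ
  | .leaf _, _ => 0
  | .node ts, i =>
      (ts.attach.map (fun t => if i ∈ leaves t.1 then 1 + leafDepth t.1 i else 0)).sum
decreasing_by have := List.sizeOf_lt_of_mem t.2; simp_wf; omega

/-- The cophenetic value of `i` and `j`: the depth of their lowest common ancestor. -/
def cophen : PTree → ℕ → ℕ → ℕ
  | .leaf _, _, _ => 0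
  | .node ts, i, j =>
      (ts.attach.map (fun t =>
        if i ∈ leaves t.1 ∧ j ∈ leaves t.1 then 1 + cophen t.1 i j else 0)).sum
decreasing_by have := List.sizeOf_lt_of_mem t.2; simp_wf; omega

/-- The nodal distance between the leaves labeled `i` and `j`:
the number of edges on the undirected path joining them. -/
def ndist : PTree → ℕ → ℕ → ℕ
  | .leaf _, _, _ => 0
  | .node ts, i, j =>
      (ts.attach.map (fun t =>
        if i ∈ leaves t.1 ∧ j ∈ leaves t.1 then ndist t.1 i j
        else if i ∈ leaves t.1 then 1 + leafDepth t.1 i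
        else if j ∈ leaves t.1 then 1 + leafDepth t.1 j
        else 0)).sum
decreasing_by have := List.sizeOf_lt_of_mem t.2; simp_wf; omega

/-- The list of the numbers of descendant leaves of each internal node,
with the root (if internal) first. -/
def allInternalSizes : PTree → List ℕ
  | .leaf _ => []
  | .node ts => (PTree.node ts).leaves.length :: ts.attach.flatMap (fun t => allInternalSizes t.1)
decreasing_by have := List.sizeOf_lt_of_mem t.2; simp_wf; omega

/-- The total cophenetic index: sum of cophenetic values over pairs of distinct leaves. -/
def Phi (T : PTree) : ℕ :=
  ∑ i ∈ T.leaves.toFinset, ∑ j ∈ T.leaves.toFinset, if i < j then cophen T i j else 0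

/-- The Sackin index: the sum of the depths of the leaves. -/
def Sackin (T : PTree) : ℕ := ∑ i ∈ T.leaves.toFinset, leafDepth T i

/-- The total area: the sum of the nodal distances between pairs of distinct leaves. -/
def Darea (T : PTree) : ℕ :=
  ∑ i ∈ T.leaves.toFinset, ∑ j ∈ T.leaves.toFinset, if i < j then ndist T i j else 0

/-- A tree is binary when every internal node has exactly two children. -/
def IsBinary : PTree → Prop
  | .leaf _ => True
  | .node ts => ts.length = 2 ∧ ∀ t ∈ ts.attach, IsBinary t.1
decreasing_by have := List.sizeOf_lt_of_mem t.2; simp_wf; omega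

/-- A tree is proper when every internal node has at least two children. -/
def Proper : PTree → Prop
  | .leaf _ => True
  | .node ts => 2 ≤ ts.length ∧ ∀ t ∈ ts.attach, Proper t.1
decreasing_by have := List.sizeOf_lt_of_mem t.2; simp_wf; omega

/-- `T` is a phylogenetic tree with `n` leaves: a proper rooted tree whose leaves are
bijectively labeled by `{1, …, n}`. -/
def IsPhylo (n : ℕ) (T : PTree) : Prop :=
  Proper T ∧ T.leaves.Nodup ∧ T.leaves.toFinset = Finset.Icc 1 n

/-- A rooted caterpillar: a binary tree all of whose internal nodes have a leaf child. -/
def IsCaterpillar : PTree → Prop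
  | .leaf _ => True
  | .node ts => ts.length = 2 ∧ (∃ t ∈ ts, ∃ i, t = PTree.leaf i) ∧
      ∀ t ∈ ts.attach, IsCaterpillar t.1
decreasing_by have := List.sizeOf_lt_of_mem t.2; simp_wf; omega

/-- A binary tree is maximally balanced when every internal node is balanced, i.e. the
numbers of descendant leaves of its two children differ by at most one. -/
def MaxBalanced : PTree → Prop
  | .leaf _ => True
  | .node [a, b] =>
      |(a.leaves.length : ℤ) - (b.leaves.length : ℤ)| ≤ 1 ∧ MaxBalanced a ∧ MaxBalanced b
  | .node _ => False

/-- Canonical representative of an isomorphism class of binary trees: at every internal node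
the subtree containing the smallest leaf label comes first. -/
def Canonical : PTree → Prop
  | .leaf _ => True
  | .node [a, b] => a.leaves.minimum < b.leaves.minimum ∧ Canonical a ∧ Canonical b
  | .node _ => False

/-- The rooted caterpillar with `n` leaves labeled `1, …, n` (for `n ≥ 1`). -/
def caterpillar : ℕ → PTree
  | 0 => .leaf 1
  | 1 => .leaf 1
  | n + 2 => .node [caterpillar (n + 1), .leaf (n + 2)]

/-- `Replace T t₀ t₀' T'` holds when `T'` is obtained from `T` by replacing the subtree `t₀`
of `T` rooted at some node by the tree `t₀'`. -/
inductive Replace : PTree → PTree → PTree → PTree → Prop where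
  | here (t₀ t₀' : PTree) : Replace t₀ t₀ t₀' t₀'
  | child (l r : List PTree) (a b t₀ t₀' : PTree) :
      Replace a t₀ t₀' b → Replace (.node (l ++ a :: r)) t₀ t₀' (.node (l ++ b :: r))

/-- The probability of a binary phylogenetic tree with `n` leaves under the Yule model. -/
noncomputable def yuleP (n : ℕ) (T : PTree) : ℝ :=
  (2 ^ (n - 1) / (n.factorial : ℝ)) *
    ((allInternalSizes T).map (fun k => ((k : ℝ) - 1)⁻¹)).prod

end PTree


section AuxProof

private lemma arith_choose (X c : ℕ) (h : 2 * X + c = c * c) : X = c.choose 2 := by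
  rw [Nat.choose_two_right]
  rcases c with _ | m
  · omega
  · have h1 : (m + 1) * (m + 1) = m * m + 2 * m + 1 := by ring
    have h2 : (m + 1) * (m + 1 - 1) = m * m + m := by
      simp
      ring
    rw [h2]
    rw [h1] at h
    omega

private lemma sum_list_sum {β : Type*} (s : Finset ℕ) (l : List β) (g : ℕ → β → ℕ) :
    ∑ i ∈ s, (l.map (g i)).sum = (l.map (fun b => ∑ i ∈ s, g i b)).sum := by
  induction l with
  | nil => simp
  | cons a l ih => simp [Finset.sum_add_distrib, ih]

private lemma sum_flatMap' {α : Type*} (l : List α) (f : α → List ℕ) :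
    (l.flatMap f).sum = (l.map (fun a => (f a).sum)).sum := by
  induction l with
  | nil => simp
  | cons a l ih => simp [ih]

private lemma pair_count (s : Finset ℕ) :
    (∑ i ∈ s, ∑ j ∈ s, if i < j then (1 : ℕ) else 0) = s.card.choose 2 := by
  have key : ∀ i j : ℕ,
      ((if i < j then (1:ℕ) else 0) + (if j < i then 1 else 0)) + (if i = j then 1 else 0) = 1 := by
    intro i j
    rcases lt_trichotomy i j with h | h | h
    · simp [h, asymm h, ne_of_lt h]
    · simp [h]
    · simp [h, asymm h, ne_of_gt h]
  have hY : (∑ i ∈ s, ∑ j ∈ s, if j < i then (1:ℕ) else 0)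
      = ∑ i ∈ s, ∑ j ∈ s, if i < j then (1:ℕ) else 0 := Finset.sum_comm
  have hZ : (∑ i ∈ s, ∑ j ∈ s, if i = j then (1:ℕ) else 0) = s.card := by
    have hd : ∀ i ∈ s, (∑ j ∈ s, if i = j then (1:ℕ) else 0) = 1 := by
      intro i hi
      rw [Finset.sum_ite_eq]
      simp [hi]
    rw [Finset.sum_congr rfl hd]
    simp
  have htot : ((∑ i ∈ s, ∑ j ∈ s, if i < j then (1:ℕ) else 0)
      + (∑ i ∈ s, ∑ j ∈ s, if j < i then (1:ℕ) else 0))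
      + (∑ i ∈ s, ∑ j ∈ s, if i = j then (1:ℕ) else 0) = s.card * s.card := by
    simp_rw [← Finset.sum_add_distrib, key]
    simp [mul_comm]
  exact arith_choose _ _ (by omega)

private lemma phi_node (ts : List PTree) (h : (PTree.node ts).leaves.Nodup) :
    PTree.Phi (PTree.node ts) =
      (ts.attach.map (fun t => Nat.choose t.1.leaves.length 2 + PTree.Phi t.1)).sum := by
  have hL : (PTree.node ts).leaves = ts.attach.flatMap (fun t => t.1.leaves) := by
    rw [PTree.leaves]
  set F := (PTree.node ts).leaves.toFinset with hF
  set g : ℕ → ℕ → {x // x ∈ ts} → ℕ := fun i j t =>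
    if i < j ∧ i ∈ t.1.leaves ∧ j ∈ t.1.leaves then 1 + PTree.cophen t.1 i j else 0 with hg
  have hmem : ∀ t ∈ ts.attach, ∀ x ∈ t.1.leaves, x ∈ F := by
    intro t ht x hx
    rw [hF, List.mem_toFinset, hL, List.mem_flatMap]
    exact ⟨t, ht, hx⟩
  have hnd : ∀ t ∈ ts.attach, t.1.leaves.Nodup := by
    intro t ht
    rw [hL] at h
    exact (List.nodup_flatMap.mp h).1 t ht
  have step1 : PTree.Phi (PTree.node ts) =
      ∑ i ∈ F, ∑ j ∈ F, (ts.attach.map (g i j)).sum := by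
    rw [PTree.Phi]
    refine Finset.sum_congr rfl fun i _ => Finset.sum_congr rfl fun j _ => ?_
    rw [PTree.cophen]
    by_cases hij : i < j
    · simp only [hg, hij, if_true, true_and]
    · simp [hg, hij]
  have step3 : ∀ t ∈ ts.attach,
      (∑ i ∈ F, ∑ j ∈ F, g i j t) = Nat.choose t.1.leaves.length 2 + PTree.Phi t.1 := by
    intro t ht
    set Ft := t.1.leaves.toFinset with hFt
    have hsub : Ft ⊆ F := fun x hx => hmem t ht x (List.mem_toFinset.mp hx)
    have houter : (∑ i ∈ F, ∑ j ∈ F, g i j t) = ∑ i ∈ Ft, ∑ j ∈ F, g i j t := by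
      refine (Finset.sum_subset hsub fun i _ hi => ?_).symm
      refine Finset.sum_eq_zero fun j _ => ?_
      have : i ∉ t.1.leaves := fun hc => hi (List.mem_toFinset.mpr hc)
      simp [hg, this]
    have hinner : ∀ i ∈ Ft, (∑ j ∈ F, g i j t) = ∑ j ∈ Ft, g i j t := by
      intro i _
      refine (Finset.sum_subset hsub fun j _ hj => ?_).symm
      have : j ∉ t.1.leaves := fun hc => hj (List.mem_toFinset.mpr hc)
      simp [hg, this]
    rw [houter, Finset.sum_congr rfl hinner]
    have hgsimp : ∀ i ∈ Ft, ∀ j ∈ Ft, g i j t =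
        (if i < j then (1:ℕ) else 0) + (if i < j then PTree.cophen t.1 i j else 0) := by
      intro i hi j hj
      have hi' : i ∈ t.1.leaves := List.mem_toFinset.mp hi
      have hj' : j ∈ t.1.leaves := List.mem_toFinset.mp hj
      rw [hg]
      by_cases hij : i < j <;> simp [hij, hi', hj']
    calc (∑ i ∈ Ft, ∑ j ∈ Ft, g i j t)
        = ∑ i ∈ Ft, ∑ j ∈ Ft,
            ((if i < j then (1:ℕ) else 0) + (if i < j then PTree.cophen t.1 i j else 0)) :=
          Finset.sum_congr rfl fun i hi => Finset.sum_congr rfl fun j hj => hgsimp i hi j hj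
      _ = (∑ i ∈ Ft, ∑ j ∈ Ft, if i < j then (1:ℕ) else 0)
            + ∑ i ∈ Ft, ∑ j ∈ Ft, if i < j then PTree.cophen t.1 i j else 0 := by
          rw [← Finset.sum_add_distrib]
          exact Finset.sum_congr rfl fun i _ => Finset.sum_add_distrib
      _ = Nat.choose t.1.leaves.length 2 + PTree.Phi t.1 := by
          rw [pair_count, PTree.Phi, hFt, List.toFinset_card_of_nodup (hnd t ht)]
  calc PTree.Phi (PTree.node ts)
      = ∑ i ∈ F, ∑ j ∈ F, (ts.attach.map (g i j)).sum := step1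
    _ = ∑ i ∈ F, (ts.attach.map (fun t => ∑ j ∈ F, g i j t)).sum :=
        Finset.sum_congr rfl fun i _ => sum_list_sum F ts.attach (fun j t => g i j t)
    _ = (ts.attach.map (fun t => ∑ i ∈ F, ∑ j ∈ F, g i j t)).sum :=
        sum_list_sum F ts.attach _
    _ = (ts.attach.map (fun t => Nat.choose t.1.leaves.length 2 + PTree.Phi t.1)).sum := by
        exact congrArg List.sum (List.map_congr_left step3)

private theorem full_sum : ∀ T : PTree, T.leaves.Nodup →
    ((PTree.allInternalSizes T).map (fun k => Nat.choose k 2)).sum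
      = Nat.choose T.leaves.length 2 + PTree.Phi T
  | .leaf i, _ => by
    simp [PTree.allInternalSizes, PTree.leaves, PTree.Phi, PTree.cophen]
  | .node ts, h => by
    have hL : (PTree.node ts).leaves = ts.attach.flatMap (fun t => t.1.leaves) := by
      rw [PTree.leaves]
    have hnd : ∀ t ∈ ts.attach, t.1.leaves.Nodup := by
      intro t ht
      rw [hL] at h
      exact (List.nodup_flatMap.mp h).1 t ht
    rw [PTree.allInternalSizes, List.map_cons, List.sum_cons, List.map_flatMap,
      sum_flatMap', phi_node ts h]
    congr 1
    refine congrArg List.sum (List.map_congr_left fun t ht => ?_)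
    exact full_sum t.1 (hnd t ht)
decreasing_by have := List.sizeOf_lt_of_mem t.2; simp_wf; omega

end AuxProof

theorem total_cophenetic_eq_cluster_sum (T : PTree) (h : T.leaves.Nodup) :
    PTree.Phi T =
      (((PTree.allInternalSizes T).tail).map (fun k => Nat.choose k 2)).sum := by
  cases T with
  | leaf i => simp [PTree.Phi, PTree.allInternalSizes, PTree.leaves, PTree.cophen]
  | node ts =>
    have hfull := full_sum (.node ts) h
    rw [PTree.allInternalSizes, List.map_cons, List.sum_cons] at hfull
    rw [PTree.allInternalSizes, List.tail_cons]
    omega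
end

section
/- For every rooted phylogenetic tree T with n leaves, (n−1)·S(T) = 2·Φ(T) + D(T), where S(T) = Σ_i δ_T(i) is the Sackin index, Φ(T) = Σ_{i<j} δ_T(LCA_T(i,j)) is the total cophenetic index, and D(T) = Σ_{i<j} d_T(i,j) is the total area (sum of nodal distances between pairs of leaves). -/
lemma PTree.list_sum_map_add {α : Type*} (l : List α) (f g : α → ℕ) :
    (l.map (fun x => f x + g x)).sum = (l.map f).sum + (l.map g).sum := by
  induction l with
  | nil => simp
  | cons a t ih => simp only [List.map_cons, List.sum_cons, ih]; omega

lemma PTree.list_mul_sum {α : Type*} (l : List α) (f : α → ℕ) (c : ℕ) :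
    c * (l.map f).sum = (l.map (fun x => c * f x)).sum := by
  induction l with
  | nil => simp
  | cons a t ih => simp [Nat.mul_add, ih]

theorem PTree.key : (T : PTree) → T.leaves.Nodup → ∀ i j : ℕ, i ≠ j →
    PTree.ndist T i j + 2 * PTree.cophen T i j = PTree.leafDepth T i + PTree.leafDepth T j
  | .leaf a, h, i, j, hij => by simp [PTree.ndist, PTree.cophen, PTree.leafDepth]
  | .node ts, h, i, j, hij => by
      have hnd : ∀ t ∈ ts.attach, (PTree.leaves t.1).Nodup := by
        intro t ht
        rw [PTree.leaves, List.nodup_flatMap] at h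
        exact h.1 t ht
      rw [PTree.ndist, PTree.cophen, PTree.leafDepth, PTree.leafDepth,
        PTree.list_mul_sum, ← PTree.list_sum_map_add, ← PTree.list_sum_map_add]
      congr 1
      apply List.map_congr_left
      intro t ht
      have IH := PTree.key t.1 (hnd t ht) i j hij
      by_cases hi : i ∈ PTree.leaves t.1 <;> by_cases hj : j ∈ PTree.leaves t.1 <;>
        simp only [hi, hj, and_true, and_false, if_true, if_false, true_and, false_and,
          if_pos, if_neg, not_false_eq_true] <;> omega
decreasing_by have := List.sizeOf_lt_of_mem t.2; simp_wf; omega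

lemma PTree.pair_sum (s : Finset ℕ) (f : ℕ → ℕ) :
    ∑ i ∈ s, ∑ j ∈ s, (if i < j then f i + f j else 0) = (s.card - 1) * ∑ i ∈ s, f i := by
  have step : ∀ i ∈ s, ∑ j ∈ s, (if i ≠ j then f i else 0) = (s.card - 1) * f i := by
    intro i hi
    rw [← Finset.sum_filter]
    rw [show s.filter (fun j => i ≠ j) = s.erase i by
      ext x; simp [Finset.mem_erase, Finset.mem_filter, and_comm, ne_comm]]
    rw [Finset.sum_const, Finset.card_erase_of_mem hi, smul_eq_mul]
  calc ∑ i ∈ s, ∑ j ∈ s, (if i < j then f i + f j else 0)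
      = ∑ i ∈ s, ∑ j ∈ s, ((if i < j then f i else 0) + (if i < j then f j else 0)) := by
        apply Finset.sum_congr rfl; intro i _; apply Finset.sum_congr rfl; intro j _
        split <;> simp
    _ = (∑ i ∈ s, ∑ j ∈ s, if i < j then f i else 0) +
          ∑ i ∈ s, ∑ j ∈ s, if i < j then f j else 0 := by
        rw [← Finset.sum_add_distrib]
        apply Finset.sum_congr rfl; intro i _; rw [Finset.sum_add_distrib]
    _ = (∑ i ∈ s, ∑ j ∈ s, if i < j then f i else 0) +
          ∑ i ∈ s, ∑ j ∈ s, if j < i then f i else 0 := by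
        congr 1; rw [Finset.sum_comm]
    _ = ∑ i ∈ s, ∑ j ∈ s, (if i ≠ j then f i else 0) := by
        rw [← Finset.sum_add_distrib]
        apply Finset.sum_congr rfl; intro i _
        rw [← Finset.sum_add_distrib]
        apply Finset.sum_congr rfl; intro j _
        by_cases hij : i = j
        · subst hij; simp
        · rcases Ne.lt_or_gt hij with h1 | h1
          · simp [h1, hij, Nat.lt_asymm h1]
          · simp [h1, hij, Nat.lt_asymm h1]
    _ = ∑ i ∈ s, (s.card - 1) * f i := Finset.sum_congr rfl step
    _ = (s.card - 1) * ∑ i ∈ s, f i := (Finset.mul_sum _ _ _).symm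

theorem sackin_phi_darea_relation (T : PTree) (h : T.leaves.Nodup) :
    (T.leaves.length - 1) * PTree.Sackin T = 2 * PTree.Phi T + PTree.Darea T := by
  classical
  have hcard : T.leaves.toFinset.card = T.leaves.length := List.toFinset_card_of_nodup h
  rw [PTree.Sackin, ← hcard, ← PTree.pair_sum, PTree.Phi, PTree.Darea,
    Finset.mul_sum, ← Finset.sum_add_distrib]
  apply Finset.sum_congr rfl
  intro i _
  rw [Finset.mul_sum, ← Finset.sum_add_distrib]
  apply Finset.sum_congr rfl
  intro j _
  split_ifs with hij
  · have := PTree.key T h i j (Nat.ne_of_lt hij); omega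
  · simp
end

section
/- Among all rooted phylogenetic trees with n leaves, the maximum value of the total cophenetic index Φ is binom(n,3), and it is attained exactly by the rooted caterpillars. -/
namespace PTreeX

lemma two_c2 : ∀ n : ℕ, 2 * Nat.choose (n+2) 2 = (n+2) * (n+1)
  | 0 => by decide
  | (n+1) => by
      rw [show n+1+2 = (n+2)+1 from rfl, Nat.choose_succ_succ, Nat.mul_add, two_c2 n,
        Nat.choose_one_right]
      ring

lemma six_c3 : ∀ n : ℕ, 6 * Nat.choose (n+3) 3 = (n+3) * (n+2) * (n+1)
  | 0 => by decide
  | (n+1) => by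
      rw [show n+1+3 = (n+3)+1 from rfl, Nat.choose_succ_succ, Nat.mul_add, six_c3 n,
        show (6:ℕ) * Nat.choose (n+3) 2 = 3 * (2 * Nat.choose (n+1+2) 2) by ring_nf,
        two_c2 (n+1)]
      ring

lemma six_c3' : ∀ n : ℕ, 6 * Nat.choose (n+2) 3 = (n+2) * (n+1) * n
  | 0 => by decide
  | (n+1) => by rw [show n+1+2 = n+3 from rfl, six_c3 n]

lemma pair_le (a b : ℕ) : Nat.choose (a+2) 3 + Nat.choose (b+2) 3 ≤ Nat.choose (a+b+2) 3 := by
  have ha := six_c3' a; have hb := six_c3' b; have hab := six_c3' (a+b)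
  have hid : (a+b+2) * (a+b+1) * (a+b) =
      (a+2) * (a+1) * a + (b+2) * (b+1) * b + 3 * (a*b*(a+b+2)) := by ring
  have key : 6 * (Nat.choose (a+2) 3 + Nat.choose (b+2) 3) ≤ 6 * Nat.choose (a+b+2) 3 := by
    rw [Nat.mul_add, ha, hb, hab, hid]
    exact Nat.le_add_right _ _
  exact Nat.le_of_mul_le_mul_left key (by norm_num)

lemma pair_lt (a b : ℕ) (ha1 : 1 ≤ a) (hb1 : 1 ≤ b) :
    Nat.choose (a+2) 3 + Nat.choose (b+2) 3 < Nat.choose (a+b+2) 3 := by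
  have ha := six_c3' a; have hb := six_c3' b; have hab := six_c3' (a+b)
  have hid : (a+b+2) * (a+b+1) * (a+b) =
      (a+2) * (a+1) * a + (b+2) * (b+1) * b + 3 * (a*b*(a+b+2)) := by ring
  have hS : 0 < 3 * (a*b*(a+b+2)) := by positivity
  have key : 6 * (Nat.choose (a+2) 3 + Nat.choose (b+2) 3) < 6 * Nat.choose (a+b+2) 3 := by
    rw [Nat.mul_add, ha, hb, hab, hid]
    exact Nat.lt_add_of_pos_right hS
  exact Nat.lt_of_mul_lt_mul_left key

lemma c3_lt (m : ℕ) (h : 2 ≤ m) : Nat.choose m 3 < Nat.choose (m+1) 3 := by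
  have h' : Nat.choose (m+1) 3 = Nat.choose m 2 + Nat.choose m 3 := Nat.choose_succ_succ m 2
  have : 0 < Nat.choose m 2 := Nat.choose_pos h
  omega

theorem list_le : ∀ (l : List ℕ), (∀ m ∈ l, 1 ≤ m) → 2 ≤ l.length →
    (l.map (fun m => Nat.choose (m+1) 3)).sum ≤ Nat.choose l.sum 3 ∧
    ((l.map (fun m => Nat.choose (m+1) 3)).sum = Nat.choose l.sum 3 ↔
      ∃ a b, l = [a, b] ∧ (a = 1 ∨ b = 1))
  | [], _, h2 => by simp at h2
  | [a], _, h2 => by simp at h2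
  | [a, b], h1, _ => by
      have ha : 1 ≤ a := h1 a (by simp)
      have hb : 1 ≤ b := h1 b (by simp)
      obtain ⟨a', rfl⟩ : ∃ a', a = a' + 1 := ⟨a - 1, by omega⟩
      obtain ⟨b', rfl⟩ : ∃ b', b = b' + 1 := ⟨b - 1, by omega⟩
      simp only [List.map_cons, List.map_nil, List.sum_cons, List.sum_nil, add_zero,
        show ∀ x : ℕ, x+1+1 = x+2 from fun x => rfl,
        show a'+1+(b'+1) = a'+b'+2 by omega]
      have hle := pair_le a' b'
      refine ⟨hle, ?_, ?_⟩
      · intro h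
        rcases Nat.eq_zero_or_pos a' with h0 | h0
        · exact ⟨1, b'+1, by rw [h0], Or.inl rfl⟩
        rcases Nat.eq_zero_or_pos b' with h0' | h0'
        · exact ⟨a'+1, 1, by rw [h0'], Or.inr rfl⟩
        exact absurd h (Nat.ne_of_lt (pair_lt a' b' h0 h0'))
      · rintro ⟨x, y, hxy, hx⟩
        simp only [List.cons.injEq, and_true] at hxy
        obtain ⟨rfl, rfl⟩ := hxy
        rcases hx with h | h
        · obtain rfl : a' = 0 := by omega
          rw [show (0:ℕ)+2 = 2 from rfl, show (0:ℕ)+b'+2 = b'+2 by omega,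
            show Nat.choose 2 3 = 0 from rfl, Nat.zero_add]
        · obtain rfl : b' = 0 := by omega
          rw [show (0:ℕ)+2 = 2 from rfl, show a'+0+2 = a'+2 by omega,
            show Nat.choose 2 3 = 0 from rfl, Nat.add_zero]
  | a :: b :: c :: rest, h1, _ => by
      have h1' : ∀ m ∈ b :: c :: rest, 1 ≤ m := fun m hm => h1 m (List.mem_cons_of_mem _ hm)
      have hIH := list_le (b :: c :: rest) h1' (by simp)
      have ha : 1 ≤ a := h1 a (by simp)
      have hs : 2 ≤ (b :: c :: rest).sum :=
        le_trans (by simp) (List.length_le_sum_of_one_le _ h1')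
      obtain ⟨a', rfl⟩ : ∃ a', a = a' + 1 := ⟨a - 1, by omega⟩
      obtain ⟨s', hs'⟩ : ∃ s', (b :: c :: rest).sum = s' + 2 := ⟨(b :: c :: rest).sum - 2, by omega⟩
      have key : (((a'+1) :: b :: c :: rest).map (fun m => Nat.choose (m+1) 3)).sum <
          Nat.choose (((a'+1) :: b :: c :: rest).sum) 3 := by
        rw [List.map_cons, List.sum_cons, List.sum_cons, hs',
          show a'+1+1 = a'+2 from rfl, show a'+1+(s'+2) = a'+(s'+1)+2 by omega]
        have h2 : ((b :: c :: rest).map (fun m => Nat.choose (m+1) 3)).sum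
            ≤ Nat.choose (s'+2) 3 := by rw [← hs']; exact hIH.1
        have h3 := c3_lt (s'+2) (by omega)
        have h4 := pair_le a' (s'+1)
        rw [show s'+2+1 = s'+1+2 from rfl] at h3
        omega
      refine ⟨le_of_lt key, fun h => absurd h (Nat.ne_of_lt key), ?_⟩
      rintro ⟨x, y, hxy, -⟩
      have : ((a'+1) :: b :: c :: rest).length = 2 := by rw [hxy]; rfl
      simp at this

end PTreeX

namespace PTree

theorem strongInduction {P : PTree → Prop}
    (h1 : ∀ i, P (.leaf i)) (h2 : ∀ ts, (∀ t ∈ ts, P t) → P (.node ts)) :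
    ∀ T, P T
  | .leaf i => h1 i
  | .node ts => h2 ts (fun t ht => strongInduction h1 h2 t)
decreasing_by have := List.sizeOf_lt_of_mem ht; simp_wf; omega

lemma leaves_node (ts : List PTree) : (PTree.node ts).leaves = ts.flatMap leaves := by
  rw [leaves]; simp

lemma cophen_node (ts : List PTree) (i j : ℕ) : cophen (.node ts) i j =
    (ts.map fun t => if i ∈ t.leaves ∧ j ∈ t.leaves then 1 + cophen t i j else 0).sum := by
  rw [cophen]
  simp

def phiAux : PTree → ℕ
  | .leaf _ => 0
  | .node ts => (ts.attach.map (fun t => Nat.choose t.1.leaves.length 2 + phiAux t.1)).sum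
decreasing_by have := List.sizeOf_lt_of_mem t.2; simp_wf; omega

lemma phiAux_node (ts : List PTree) : phiAux (.node ts) =
    (ts.map fun t => Nat.choose t.leaves.length 2 + phiAux t).sum := by
  rw [phiAux]
  simp

lemma proper_node_iff (ts : List PTree) :
    Proper (.node ts) ↔ 2 ≤ ts.length ∧ ∀ t ∈ ts, Proper t := by
  rw [Proper]
  constructor
  · rintro ⟨h1, h2⟩; exact ⟨h1, fun t ht => h2 ⟨t, ht⟩ (List.mem_attach _ _)⟩
  · rintro ⟨h1, h2⟩; exact ⟨h1, fun t _ => h2 t.1 t.2⟩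

end PTree

namespace PTreeX

open PTree

lemma two_c2A : ∀ n : ℕ, 2 * Nat.choose n 2 = n * (n - 1)
  | 0 => by decide
  | 1 => by decide
  | (n+2) => by rw [two_c2 n]; rfl

lemma sq_split : ∀ c : ℕ, c * c = c * (c - 1) + c
  | 0 => rfl
  | (k+1) => by show (k+1)*(k+1) = (k+1)*k + (k+1); ring

lemma count_pairs (s : Finset ℕ) :
    (∑ i ∈ s, ∑ j ∈ s, if i < j then (1:ℕ) else 0) = Nat.choose s.card 2 := by
  have h1 : (∑ i ∈ s, ∑ j ∈ s, if i < j then (1:ℕ) else 0)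
      + (∑ i ∈ s, ∑ j ∈ s, if j < i then (1:ℕ) else 0)
      + (∑ i ∈ s, ∑ j ∈ s, if i = j then (1:ℕ) else 0) = s.card * s.card := by
    rw [← Finset.sum_add_distrib, ← Finset.sum_add_distrib]
    simp only [← Finset.sum_add_distrib]
    have : ∀ i j : ℕ, ((if i < j then (1:ℕ) else 0) + (if j < i then 1 else 0))
        + (if i = j then 1 else 0) = 1 := by
      intro i j; split_ifs <;> omega
    simp only [this, Finset.sum_const, smul_eq_mul, mul_one]
  have h2 : (∑ i ∈ s, ∑ j ∈ s, if j < i then (1:ℕ) else 0)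
      = (∑ i ∈ s, ∑ j ∈ s, if i < j then (1:ℕ) else 0) := Finset.sum_comm
  have h3 : (∑ i ∈ s, ∑ j ∈ s, if i = j then (1:ℕ) else 0) = s.card := by
    have : ∀ i ∈ s, (∑ j ∈ s, if i = j then (1:ℕ) else 0) = 1 := by
      intro i hi
      rw [Finset.sum_ite_eq s i (fun _ => (1:ℕ))]
      simp [hi]
    rw [Finset.sum_congr rfl this]
    simp
  have h4 := two_c2A s.card
  have h5 := sq_split s.card
  linarith

lemma nodup_of_mem_flatMap : ∀ (l : List PTree), (l.flatMap leaves).Nodup →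
    ∀ t ∈ l, t.leaves.Nodup := by
  intro l
  induction l with
  | nil => intro _ t ht; cases ht
  | cons a l ih =>
    intro h t ht
    rw [List.flatMap_cons, List.nodup_append] at h
    rcases List.mem_cons.1 ht with rfl | ht'
    · exact h.1
    · exact ih h.2.1 t ht'

lemma leaves_length_pos : ∀ T, Proper T → 1 ≤ T.leaves.length := by
  refine strongInduction (fun i => by simp [leaves]) ?_
  intro ts ih hP
  rw [proper_node_iff] at hP
  obtain ⟨h2, hch⟩ := hP
  obtain ⟨t, ht⟩ := List.exists_mem_of_ne_nil ts (by intro h; rw [h] at h2; simp at h2)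
  have h1 := ih t ht (hch t ht)
  rw [leaves_node, List.length_flatMap]
  have hmem : (List.length ∘ leaves) t ∈ ts.map (List.length ∘ leaves) :=
    List.mem_map_of_mem ht
  have := List.single_le_sum (fun x _ => Nat.zero_le x) _ hmem
  simp only [Function.comp_def] at this
  omega

lemma leaf_of_one : ∀ T, Proper T → T.leaves.length = 1 → ∃ i, T = .leaf i := by
  intro T
  cases T with
  | leaf i => exact fun _ _ => ⟨i, rfl⟩
  | node ts =>
    intro hP h1
    exfalso
    rw [proper_node_iff] at hP
    obtain ⟨h2, hch⟩ := hP
    rw [leaves_node, List.length_flatMap] at h1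
    have hlen : (ts.map (List.length ∘ leaves)).length ≤ (ts.map (List.length ∘ leaves)).sum := by
      apply List.length_le_sum_of_one_le
      intro m hm
      obtain ⟨t, ht, rfl⟩ := List.mem_map.1 hm
      exact leaves_length_pos t (hch t ht)
    rw [List.length_map] at hlen
    simp only [Function.comp_def] at hlen
    omega

lemma phi_split : ∀ (l : List PTree), (l.flatMap leaves).Nodup →
    (∀ t ∈ l, Phi t = phiAux t) →
    (∑ i ∈ (l.flatMap leaves).toFinset, ∑ j ∈ (l.flatMap leaves).toFinset,
      if i < j then (l.map fun t =>
        if i ∈ t.leaves ∧ j ∈ t.leaves then 1 + cophen t i j else 0).sum else 0)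
    = (l.map fun t => Nat.choose t.leaves.length 2 + phiAux t).sum := by
  intro l
  induction l with
  | nil => intro _ _; simp
  | cons t l ih =>
    intro hnd hPhi
    have hnd' := hnd
    rw [List.flatMap_cons, List.nodup_append] at hnd'
    obtain ⟨nd1, nd2, disj⟩ := hnd'
    replace disj : List.Disjoint (leaves t) (l.flatMap leaves) := fun x hx hx' => disj x hx x hx' rfl
    have hdisjF : Disjoint (leaves t).toFinset (l.flatMap leaves).toFinset :=
      List.disjoint_toFinset_iff_disjoint.2 disj
    have hiA : ∀ i ∈ (leaves t).toFinset, i ∈ leaves t := fun i hi => List.mem_toFinset.1 hi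
    have hiB : ∀ i ∈ (l.flatMap leaves).toFinset, i ∈ l.flatMap leaves :=
      fun i hi => List.mem_toFinset.1 hi
    -- the generic summand
    set F : ℕ → ℕ → ℕ := fun i j => if i < j then ((t :: l).map fun t' =>
        if i ∈ t'.leaves ∧ j ∈ t'.leaves then 1 + cophen t' i j else 0).sum else 0 with hF
    have key : (∑ i ∈ ((t :: l).flatMap leaves).toFinset,
        ∑ j ∈ ((t :: l).flatMap leaves).toFinset, F i j)
        = (∑ i ∈ (leaves t).toFinset, ∑ j ∈ (leaves t).toFinset, F i j)
        + (∑ i ∈ (leaves t).toFinset, ∑ j ∈ (l.flatMap leaves).toFinset, F i j)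
        + (∑ i ∈ (l.flatMap leaves).toFinset, ∑ j ∈ (leaves t).toFinset, F i j)
        + (∑ i ∈ (l.flatMap leaves).toFinset, ∑ j ∈ (l.flatMap leaves).toFinset, F i j) := by
      rw [List.flatMap_cons, List.toFinset_append, Finset.sum_union hdisjF]
      simp only [Finset.sum_union hdisjF]
      rw [Finset.sum_add_distrib, Finset.sum_add_distrib]
      ring
    rw [key]
    -- cross terms vanish
    have cross1 : (∑ i ∈ (leaves t).toFinset, ∑ j ∈ (l.flatMap leaves).toFinset, F i j) = 0 := by
      apply Finset.sum_eq_zero; intro i hi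
      apply Finset.sum_eq_zero; intro j hj
      rw [hF]
      simp only
      split
      · apply List.sum_eq_zero
        intro x hx
        obtain ⟨t', ht', rfl⟩ := List.mem_map.1 hx
        rcases List.mem_cons.1 ht' with rfl | ht''
        · rw [if_neg]; rintro ⟨-, hjt⟩
          exact disj hjt (hiB j hj)
        · rw [if_neg]; rintro ⟨hit', -⟩
          exact disj (hiA i hi) (List.mem_flatMap.2 ⟨t', ht'', hit'⟩)
      · rfl
    have cross2 : (∑ i ∈ (l.flatMap leaves).toFinset, ∑ j ∈ (leaves t).toFinset, F i j) = 0 := by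
      apply Finset.sum_eq_zero; intro i hi
      apply Finset.sum_eq_zero; intro j hj
      rw [hF]
      simp only
      split
      · apply List.sum_eq_zero
        intro x hx
        obtain ⟨t', ht', rfl⟩ := List.mem_map.1 hx
        rcases List.mem_cons.1 ht' with rfl | ht''
        · rw [if_neg]; rintro ⟨hit, -⟩
          exact disj hit (hiB i hi)
        · rw [if_neg]; rintro ⟨-, hjt'⟩
          exact disj (hiA j hj) (List.mem_flatMap.2 ⟨t', ht'', hjt'⟩)
      · rfl
    -- diagonal B block: head contributes 0
    have hBB : (∑ i ∈ (l.flatMap leaves).toFinset, ∑ j ∈ (l.flatMap leaves).toFinset, F i j)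
        = (l.map fun t' => Nat.choose t'.leaves.length 2 + phiAux t').sum := by
      rw [← ih nd2 (fun t' ht' => hPhi t' (List.mem_cons_of_mem _ ht'))]
      apply Finset.sum_congr rfl; intro i hi
      apply Finset.sum_congr rfl; intro j hj
      rw [hF]
      simp only [List.map_cons, List.sum_cons]
      have hhead : (if i ∈ t.leaves ∧ j ∈ t.leaves then 1 + cophen t i j else 0) = 0 := by
        rw [if_neg]; rintro ⟨hit, -⟩; exact disj hit (hiB i hi)
      rw [hhead, Nat.zero_add]
    -- diagonal A block
    have hAA : (∑ i ∈ (leaves t).toFinset, ∑ j ∈ (leaves t).toFinset, F i j)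
        = Nat.choose t.leaves.length 2 + phiAux t := by
      have step : ∀ i ∈ (leaves t).toFinset, ∀ j ∈ (leaves t).toFinset,
          F i j = (if i < j then (1:ℕ) else 0) + (if i < j then cophen t i j else 0) := by
        intro i hi j hj
        rw [hF]
        simp only [List.map_cons, List.sum_cons]
        have htail : (l.map fun t' =>
            if i ∈ t'.leaves ∧ j ∈ t'.leaves then 1 + cophen t' i j else 0).sum = 0 := by
          apply List.sum_eq_zero
          intro x hx
          obtain ⟨t', ht', rfl⟩ := List.mem_map.1 hx
          rw [if_neg]; rintro ⟨hit', -⟩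
          exact disj (hiA i hi) (List.mem_flatMap.2 ⟨t', ht', hit'⟩)
        have hhead : (if i ∈ t.leaves ∧ j ∈ t.leaves then 1 + cophen t i j else 0)
            = 1 + cophen t i j := if_pos ⟨hiA i hi, hiA j hj⟩
        rw [htail, hhead, Nat.add_zero]
        split_ifs <;> simp
      calc (∑ i ∈ (leaves t).toFinset, ∑ j ∈ (leaves t).toFinset, F i j)
          = ∑ i ∈ (leaves t).toFinset, ∑ j ∈ (leaves t).toFinset,
            ((if i < j then (1:ℕ) else 0) + (if i < j then cophen t i j else 0)) := by
            apply Finset.sum_congr rfl; intro i hi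
            apply Finset.sum_congr rfl; intro j hj
            exact step i hi j hj
        _ = (∑ i ∈ (leaves t).toFinset, ∑ j ∈ (leaves t).toFinset, if i < j then (1:ℕ) else 0)
            + (∑ i ∈ (leaves t).toFinset, ∑ j ∈ (leaves t).toFinset,
              if i < j then cophen t i j else 0) := by
            rw [← Finset.sum_add_distrib]
            apply Finset.sum_congr rfl; intro i hi
            rw [← Finset.sum_add_distrib]
        _ = Nat.choose t.leaves.length 2 + phiAux t := by
            rw [count_pairs, List.toFinset_card_of_nodup nd1]
            congr 1
            rw [← hPhi t List.mem_cons_self]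
            rfl
    rw [cross1, cross2, hBB, hAA, List.map_cons, List.sum_cons]
    omega

lemma phi_eq_phiAux : ∀ T, T.leaves.Nodup → Phi T = phiAux T := by
  refine strongInduction ?_ ?_
  · intro i _
    simp [Phi, leaves, cophen, phiAux]
  · intro ts ih hnd
    have hnd' : (ts.flatMap leaves).Nodup := by rwa [leaves_node] at hnd
    have : Phi (.node ts) = ∑ i ∈ (ts.flatMap leaves).toFinset,
        ∑ j ∈ (ts.flatMap leaves).toFinset,
        if i < j then (ts.map fun t =>
          if i ∈ t.leaves ∧ j ∈ t.leaves then 1 + cophen t i j else 0).sum else 0 := by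
      rw [Phi, leaves_node]
      apply Finset.sum_congr rfl; intro i _
      apply Finset.sum_congr rfl; intro j _
      rw [cophen_node]
    rw [this, phi_split ts hnd'
      (fun t ht => ih t ht (nodup_of_mem_flatMap ts hnd' t ht)), phiAux_node]

lemma phiAux_main : ∀ T, Proper T → T.leaves.Nodup →
    phiAux T ≤ Nat.choose T.leaves.length 3 ∧
    (phiAux T = Nat.choose T.leaves.length 3 ↔ IsCaterpillar T) := by
  refine strongInduction ?_ ?_
  · intro i _ _
    constructor
    · simp [phiAux, leaves]
    · constructor
      · intro _; rw [IsCaterpillar]; trivial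
      · intro _; simp only [phiAux, leaves, List.length_cons, List.length_nil]; decide
  · intro ts ih hP hnd
    rw [proper_node_iff] at hP
    obtain ⟨hlen, hchP⟩ := hP
    have hnd' : (ts.flatMap leaves).Nodup := by rwa [leaves_node] at hnd
    have hchnd : ∀ t ∈ ts, t.leaves.Nodup := nodup_of_mem_flatMap ts hnd'
    have ihall : ∀ t ∈ ts, phiAux t ≤ Nat.choose t.leaves.length 3 ∧
        (phiAux t = Nat.choose t.leaves.length 3 ↔ IsCaterpillar t) :=
      fun t ht => ih t ht (hchP t ht) (hchnd t ht)
    have hL1 : ∀ m ∈ ts.map (fun t => t.leaves.length), 1 ≤ m := by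
      intro m hm
      obtain ⟨t, ht, rfl⟩ := List.mem_map.1 hm
      exact leaves_length_pos t (hchP t ht)
    have hLlen : 2 ≤ (ts.map (fun t => t.leaves.length)).length := by
      rw [List.length_map]; exact hlen
    have hsum : (PTree.node ts).leaves.length = (ts.map (fun t => t.leaves.length)).sum := by
      rw [leaves_node, List.length_flatMap]
    have hlist := list_le (ts.map (fun t => t.leaves.length)) hL1 hLlen
    have hstep : phiAux (.node ts) ≤
        ((ts.map (fun t => t.leaves.length)).map (fun m => Nat.choose (m+1) 3)).sum := by
      rw [phiAux_node, List.map_map]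
      apply List.sum_le_sum
      intro t ht
      have h1 := (ihall t ht).1
      have h2 : Nat.choose (t.leaves.length + 1) 3
          = Nat.choose t.leaves.length 2 + Nat.choose t.leaves.length 3 :=
        Nat.choose_succ_succ _ 2
      simp only [Function.comp]
      omega
    have hbound : phiAux (.node ts) ≤ Nat.choose (PTree.node ts).leaves.length 3 := by
      rw [hsum]; exact le_trans hstep hlist.1
    refine ⟨hbound, ?_, ?_⟩
    · intro heq
      rw [hsum] at heq
      have hBeq : ((ts.map (fun t => t.leaves.length)).map (fun m => Nat.choose (m+1) 3)).sum
          = Nat.choose (ts.map (fun t => t.leaves.length)).sum 3 := by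
        have := hlist.1
        omega
      obtain ⟨a, b, hab, h1or⟩ := hlist.2.1 hBeq
      have hts2 : ts.length = 2 := by
        have := congrArg List.length hab
        rw [List.length_map] at this
        simpa using this
      obtain ⟨ta, tb, rfl⟩ := List.length_eq_two.1 hts2
      have hmema : ta ∈ [ta, tb] := by simp
      have hmemb : tb ∈ [ta, tb] := by simp
      -- identify a and b
      have haa : ta.leaves.length = a ∧ tb.leaves.length = b := by
        simp only [List.map_cons, List.map_nil, List.cons.injEq, and_true] at hab
        exact ⟨hab.1, hab.2⟩
      -- pointwise equalities
      have hexp : phiAux (.node [ta, tb]) = (Nat.choose ta.leaves.length 2 + phiAux ta)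
          + (Nat.choose tb.leaves.length 2 + phiAux tb) := by
        rw [phiAux_node]; simp
      have hsum2 : ([ta, tb].map (fun t => t.leaves.length)).sum
          = ta.leaves.length + tb.leaves.length := by simp
      have hc2a : Nat.choose (ta.leaves.length + 1) 3
          = Nat.choose ta.leaves.length 2 + Nat.choose ta.leaves.length 3 :=
        Nat.choose_succ_succ _ 2
      have hc2b : Nat.choose (tb.leaves.length + 1) 3
          = Nat.choose tb.leaves.length 2 + Nat.choose tb.leaves.length 3 :=
        Nat.choose_succ_succ _ 2
      have hBexp : (([ta, tb].map (fun t => t.leaves.length)).map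
          (fun m => Nat.choose (m+1) 3)).sum
          = Nat.choose (ta.leaves.length + 1) 3 + Nat.choose (tb.leaves.length + 1) 3 := by simp
      have hpa := (ihall ta hmema).1
      have hpb := (ihall tb hmemb).1
      have heqa : phiAux ta = Nat.choose ta.leaves.length 3 := by
        rw [hBexp, hsum2] at hBeq
        rw [hexp, hsum2] at heq
        omega
      have heqb : phiAux tb = Nat.choose tb.leaves.length 3 := by
        rw [hBexp, hsum2] at hBeq
        rw [hexp, hsum2] at heq
        omega
      have hcata : IsCaterpillar ta := (ihall ta hmema).2.1 heqa
      have hcatb : IsCaterpillar tb := (ihall tb hmemb).2.1 heqb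
      -- leaf child
      have hleaf : (∃ i, ta = PTree.leaf i) ∨ (∃ i, tb = PTree.leaf i) := by
        rcases h1or with h | h
        · exact Or.inl (leaf_of_one ta (hchP ta hmema) (by rw [haa.1, h]))
        · exact Or.inr (leaf_of_one tb (hchP tb hmemb) (by rw [haa.2, h]))
      rw [IsCaterpillar]
      refine ⟨rfl, ?_, ?_⟩
      · rcases hleaf with ⟨i, hi⟩ | ⟨i, hi⟩
        · exact ⟨ta, hmema, i, hi⟩
        · exact ⟨tb, hmemb, i, hi⟩
      · rintro ⟨t, ht⟩ -
        rcases List.mem_cons.1 ht with rfl | ht'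
        · exact hcata
        · rcases List.mem_cons.1 ht' with rfl | ht''
          · exact hcatb
          · cases ht''
    · intro hcat
      rw [IsCaterpillar] at hcat
      obtain ⟨hlen2, ⟨tl, htl, i, hleaf⟩, hall⟩ := hcat
      obtain ⟨ta, tb, rfl⟩ := List.length_eq_two.1 hlen2
      have hmema : ta ∈ ([ta, tb] : List PTree) := by simp
      have hmemb : tb ∈ ([ta, tb] : List PTree) := by simp
      have hcata : IsCaterpillar ta := hall ⟨ta, hmema⟩ (List.mem_attach _ _)
      have hcatb : IsCaterpillar tb := hall ⟨tb, hmemb⟩ (List.mem_attach _ _)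
      have hpa : phiAux ta = Nat.choose ta.leaves.length 3 := (ihall ta hmema).2.2 hcata
      have hpb : phiAux tb = Nat.choose tb.leaves.length 3 := (ihall tb hmemb).2.2 hcatb
      have hexp : phiAux (.node [ta, tb]) = (Nat.choose ta.leaves.length 2 + phiAux ta)
          + (Nat.choose tb.leaves.length 2 + phiAux tb) := by
        rw [phiAux_node]; simp
      have hslen : (PTree.node [ta, tb]).leaves.length
          = ta.leaves.length + tb.leaves.length := by
        rw [hsum]; simp
      have hc2a : Nat.choose (ta.leaves.length + 1) 3
          = Nat.choose ta.leaves.length 2 + Nat.choose ta.leaves.length 3 :=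
        Nat.choose_succ_succ _ 2
      have hc2b : Nat.choose (tb.leaves.length + 1) 3
          = Nat.choose tb.leaves.length 2 + Nat.choose tb.leaves.length 3 :=
        Nat.choose_succ_succ _ 2
      have hlen1 : tl.leaves.length = 1 := by rw [hleaf]; simp [leaves]
      have e2 : Nat.choose 1 2 = 0 := by decide
      have e3 : Nat.choose 1 3 = 0 := by decide
      rw [hexp, hpa, hpb, hslen]
      rcases List.mem_cons.1 htl with rfl | htl'
      · rw [hlen1]
        have hcomm : (1:ℕ) + tb.leaves.length = tb.leaves.length + 1 := Nat.add_comm _ _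
        rw [hcomm]
        omega
      · rcases List.mem_cons.1 htl' with rfl | htl''
        · rw [hlen1]
          omega
        · cases htl''

end PTreeX

theorem phi_max_iff_caterpillar (n : ℕ) (T : PTree) (hT : PTree.IsPhylo n T) :
    PTree.Phi T ≤ Nat.choose n 3 ∧
    (PTree.Phi T = Nat.choose n 3 ↔ PTree.IsCaterpillar T) := by
  obtain ⟨hP, hnd, hset⟩ := hT
  have hn : T.leaves.length = n := by
    rw [← List.toFinset_card_of_nodup hnd, hset, Nat.card_Icc]
    omega
  rw [← hn, PTreeX.phi_eq_phiAux T hnd]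
  exact PTreeX.phiAux_main T hP hnd
end

section
/- Let T_0 be the binary tree whose root z has children a and b, where a has subtrees T_1 (with x_1 leaves) and T_2 (with x_2 leaves) and b has subtrees T_3 (with x_3 leaves) and T_4 (with x_4 leaves), and let T_0' be obtained by interchanging T_2 and T_4. Then Φ(T_0') − Φ(T_0) = (x_1 − x_3)(x_4 − x_2). In particular, if x_1 > x_3 and x_2 > x_4 then Φ(T_0') < Φ(T_0). -/
namespace PhiAux
open PTree

lemma leaves_pair (a b : PTree) : (PTree.node [a,b]).leaves = a.leaves ++ b.leaves := by
  rw [PTree.leaves]; simp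

lemma cophen_pair (a b : PTree) (i j : ℕ) : PTree.cophen (PTree.node [a,b]) i j =
    (if i ∈ a.leaves ∧ j ∈ a.leaves then 1 + PTree.cophen a i j else 0) +
    (if i ∈ b.leaves ∧ j ∈ b.leaves then 1 + PTree.cophen b i j else 0) := by
  rw [PTree.cophen]; simp

def ind (l : List ℕ) (i : ℕ) : ℤ := if i ∈ l then 1 else 0

def eterm (LA LB LC LD : List ℕ) (i j : ℕ) : ℤ :=
  ind LA i * ind LD j + ind LD i * ind LA j + ind LC i * ind LB j + ind LB i * ind LC j
  - ind LA i * ind LB j - ind LB i * ind LA j - ind LC i * ind LD j - ind LD i * ind LC j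

lemma eterm_symm (LA LB LC LD : List ℕ) (i j : ℕ) :
    eterm LA LB LC LD j i = eterm LA LB LC LD i j := by
  simp only [eterm]; ring

lemma eterm_diag (LA LB LC LD : List ℕ)
    (dAB : LA.Disjoint LB) (dAC : LA.Disjoint LC) (dAD : LA.Disjoint LD)
    (dBC : LB.Disjoint LC) (dBD : LB.Disjoint LD) (dCD : LC.Disjoint LD)
    (i : ℕ) : eterm LA LB LC LD i i = 0 := by
  simp only [eterm, ind]
  by_cases h1 : i ∈ LA <;> by_cases h2 : i ∈ LB <;> by_cases h3 : i ∈ LC <;>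
    by_cases h4 : i ∈ LD <;>
  first
  | exact (dAB h1 h2).elim
  | exact (dAC h1 h3).elim
  | exact (dAD h1 h4).elim
  | exact (dBC h2 h3).elim
  | exact (dBD h2 h4).elim
  | exact (dCD h3 h4).elim
  | (simp only [h1, h2, h3, h4, if_true, if_false] <;> ring)

lemma sum_ind (S : Finset ℕ) (l : List ℕ) (hn : l.Nodup) (hsub : l.toFinset ⊆ S) :
    ∑ i ∈ S, ind l i = (l.length : ℤ) := by
  classical
  rw [← Finset.sum_subset hsub
    (fun x _ hx => by simp only [List.mem_toFinset] at hx; simp [ind, hx])]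
  rw [Finset.sum_congr rfl
    (fun x hx => by simp only [List.mem_toFinset] at hx; simp [ind, hx] : ∀ x ∈ l.toFinset, ind l x = 1)]
  simp [List.toFinset_card_of_nodup hn]

lemma key (T₁ T₂ T₃ T₄ : PTree)
    (dAB : T₁.leaves.Disjoint T₂.leaves) (dAC : T₁.leaves.Disjoint T₃.leaves)
    (dAD : T₁.leaves.Disjoint T₄.leaves) (dBC : T₂.leaves.Disjoint T₃.leaves)
    (dBD : T₂.leaves.Disjoint T₄.leaves) (dCD : T₃.leaves.Disjoint T₄.leaves)
    (i j : ℕ) :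
    (PTree.cophen (PTree.node [PTree.node [T₁, T₄], PTree.node [T₃, T₂]]) i j : ℤ) -
      PTree.cophen (PTree.node [PTree.node [T₁, T₂], PTree.node [T₃, T₄]]) i j =
    eterm T₁.leaves T₂.leaves T₃.leaves T₄.leaves i j := by
  simp only [cophen_pair, leaves_pair, List.mem_append, eterm, ind]
  by_cases h1 : i ∈ T₁.leaves <;> by_cases h2 : i ∈ T₂.leaves <;>
    by_cases h3 : i ∈ T₃.leaves <;> by_cases h4 : i ∈ T₄.leaves <;>
    by_cases h5 : j ∈ T₁.leaves <;> by_cases h6 : j ∈ T₂.leaves <;>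
    by_cases h7 : j ∈ T₃.leaves <;> by_cases h8 : j ∈ T₄.leaves <;>
  first
  | exact (dAB h1 h2).elim
  | exact (dAC h1 h3).elim
  | exact (dAD h1 h4).elim
  | exact (dBC h2 h3).elim
  | exact (dBD h2 h4).elim
  | exact (dCD h3 h4).elim
  | exact (dAB h5 h6).elim
  | exact (dAC h5 h7).elim
  | exact (dAD h5 h8).elim
  | exact (dBC h6 h7).elim
  | exact (dBD h6 h8).elim
  | exact (dCD h7 h8).elim
  | (simp only [h1, h2, h3, h4, h5, h6, h7, h8, true_and, and_true, false_and, and_false,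
      true_or, or_true, false_or, or_false, if_true, if_false, not_false_iff] <;>
      push_cast <;> ring)

end PhiAux

theorem phi_cousin_interchange (T₁ T₂ T₃ T₄ : PTree)
    (hnd : (PTree.node [PTree.node [T₁, T₂], PTree.node [T₃, T₄]]).leaves.Nodup) :
    (PTree.Phi (PTree.node [PTree.node [T₁, T₄], PTree.node [T₃, T₂]]) : ℤ) -
        PTree.Phi (PTree.node [PTree.node [T₁, T₂], PTree.node [T₃, T₄]]) =
      ((T₁.leaves.length : ℤ) - T₃.leaves.length) *
        ((T₄.leaves.length : ℤ) - T₂.leaves.length) ∧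
    (T₃.leaves.length < T₁.leaves.length → T₄.leaves.length < T₂.leaves.length →
      PTree.Phi (PTree.node [PTree.node [T₁, T₄], PTree.node [T₃, T₂]]) <
        PTree.Phi (PTree.node [PTree.node [T₁, T₂], PTree.node [T₃, T₄]])) := by
  classical
  simp only [PhiAux.leaves_pair] at hnd
  rw [List.nodup_append] at hnd
  obtain ⟨h12, h34, dX⟩ := hnd
  rw [List.nodup_append] at h12 h34
  obtain ⟨hA, hB, dAB⟩ := h12
  obtain ⟨hC, hD, dCD⟩ := h34
  have dAC : T₁.leaves.Disjoint T₃.leaves :=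
    fun x hx hy => dX x (List.mem_append_left _ hx) x (List.mem_append_left _ hy) rfl
  have dAD : T₁.leaves.Disjoint T₄.leaves :=
    fun x hx hy => dX x (List.mem_append_left _ hx) x (List.mem_append_right _ hy) rfl
  have dBC : T₂.leaves.Disjoint T₃.leaves :=
    fun x hx hy => dX x (List.mem_append_right _ hx) x (List.mem_append_left _ hy) rfl
  have dBD : T₂.leaves.Disjoint T₄.leaves :=
    fun x hx hy => dX x (List.mem_append_right _ hx) x (List.mem_append_right _ hy) rfl
  set S := (PTree.node [PTree.node [T₁, T₂], PTree.node [T₃, T₄]]).leaves.toFinset with hSdef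
  have hS : (PTree.node [PTree.node [T₁, T₄], PTree.node [T₃, T₂]]).leaves.toFinset = S := by
    rw [hSdef]; simp only [PhiAux.leaves_pair]; ext x; simp; tauto
  have hmain : (PTree.Phi (PTree.node [PTree.node [T₁, T₄], PTree.node [T₃, T₂]]) : ℤ) -
      PTree.Phi (PTree.node [PTree.node [T₁, T₂], PTree.node [T₃, T₄]]) =
      ∑ i ∈ S, ∑ j ∈ S, if i < j then
        PhiAux.eterm T₁.leaves T₂.leaves T₃.leaves T₄.leaves i j else 0 := by
    simp only [PTree.Phi]
    rw [hS]
    push_cast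
    rw [← Finset.sum_sub_distrib]
    refine Finset.sum_congr rfl fun i _ => ?_
    rw [← Finset.sum_sub_distrib]
    refine Finset.sum_congr rfl fun j _ => ?_
    have hk := PhiAux.key T₁ T₂ T₃ T₄ (fun x hx hy => dAB x hx x hy rfl) dAC dAD dBC dBD
      (fun x hx hy => dCD x hx x hy rfl) i j
    by_cases hij : i < j
    · simp only [if_pos hij]; exact hk
    · simp [if_neg hij]
  have hsubA : T₁.leaves.toFinset ⊆ S := by
    rw [hSdef]; intro x hx; simp only [List.mem_toFinset] at hx
    simp [PhiAux.leaves_pair, hx]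
  have hsubB : T₂.leaves.toFinset ⊆ S := by
    rw [hSdef]; intro x hx; simp only [List.mem_toFinset] at hx
    simp [PhiAux.leaves_pair, hx]
  have hsubC : T₃.leaves.toFinset ⊆ S := by
    rw [hSdef]; intro x hx; simp only [List.mem_toFinset] at hx
    simp [PhiAux.leaves_pair, hx]
  have hsubD : T₄.leaves.toFinset ⊆ S := by
    rw [hSdef]; intro x hx; simp only [List.mem_toFinset] at hx
    simp [PhiAux.leaves_pair, hx]
  have sA := PhiAux.sum_ind S T₁.leaves hA hsubA
  have sB := PhiAux.sum_ind S T₂.leaves hB hsubB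
  have sC := PhiAux.sum_ind S T₃.leaves hC hsubC
  have sD := PhiAux.sum_ind S T₄.leaves hD hsubD
  set X := ∑ i ∈ S, ∑ j ∈ S, if i < j then
      PhiAux.eterm T₁.leaves T₂.leaves T₃.leaves T₄.leaves i j else 0 with hXdef
  have hswap : X = ∑ i ∈ S, ∑ j ∈ S, if j < i then
      PhiAux.eterm T₁.leaves T₂.leaves T₃.leaves T₄.leaves i j else 0 := by
    rw [hXdef, Finset.sum_comm]
    exact Finset.sum_congr rfl fun i _ => Finset.sum_congr rfl fun j _ => by
      rw [PhiAux.eterm_symm]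
  have h2X : X + X = ∑ i ∈ S, ∑ j ∈ S,
      PhiAux.eterm T₁.leaves T₂.leaves T₃.leaves T₄.leaves i j := by
    nth_rewrite 2 [hswap]
    rw [hXdef, ← Finset.sum_add_distrib]
    refine Finset.sum_congr rfl fun i _ => ?_
    rw [← Finset.sum_add_distrib]
    refine Finset.sum_congr rfl fun j _ => ?_
    rcases lt_trichotomy i j with h | h | h
    · simp [h, not_lt.2 (le_of_lt h)]
    · subst h
      simp [PhiAux.eterm_diag _ _ _ _ (fun x hx hy => dAB x hx x hy rfl) dAC dAD dBC dBD
        (fun x hx hy => dCD x hx x hy rfl) i]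
    · simp [h, not_lt.2 (le_of_lt h)]
  have hsep : ∑ i ∈ S, ∑ j ∈ S,
      PhiAux.eterm T₁.leaves T₂.leaves T₃.leaves T₄.leaves i j =
      2 * (((T₁.leaves.length : ℤ) - T₃.leaves.length) *
        ((T₄.leaves.length : ℤ) - T₂.leaves.length)) := by
    simp only [PhiAux.eterm, Finset.sum_sub_distrib, Finset.sum_add_distrib,
      ← Finset.mul_sum, ← Finset.sum_mul]
    rw [sA, sB, sC, sD]; ring
  have hX : X = ((T₁.leaves.length : ℤ) - T₃.leaves.length) *
      ((T₄.leaves.length : ℤ) - T₂.leaves.length) := by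
    have := h2X.trans hsep; linarith
  have heq := hmain.trans hX
  refine ⟨heq, fun h13 h24 => ?_⟩
  have hneg : ((T₁.leaves.length : ℤ) - T₃.leaves.length) *
      ((T₄.leaves.length : ℤ) - T₂.leaves.length) < 0 :=
    mul_neg_of_pos_of_neg (by omega) (by omega)
  have : (PTree.Phi (PTree.node [PTree.node [T₁, T₄], PTree.node [T₃, T₂]]) : ℤ) <
      PTree.Phi (PTree.node [PTree.node [T₁, T₂], PTree.node [T₃, T₄]]) := by linarith
  exact_mod_cast this
end

section
/- A binary phylogenetic tree T with n leaves attains the minimum of the total cophenetic index Φ over all binary phylogenetic trees with n leaves if and only if T is maximally balanced. -/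
section PhiAuxSec


namespace PhiAux

def d : ℕ → ℕ
  | 0 => 0
  | n+1 => (n+1)/2 + d ((n+1)/2)
decreasing_by omega

def f : ℕ → ℕ
  | 0 => 0
  | n+1 => f n + d n

def g (n : ℕ) : ℕ := f n + n.choose 2

lemma d_mono : ∀ b a, a ≤ b → d a ≤ d b := by
  intro b
  induction b using Nat.strong_induction_on with
  | _ b ih =>
    intro a hab
    match a, b with
    | 0, b => simp [d]
    | a+1, b+1 =>
      rw [d, d]
      exact Nat.add_le_add (Nat.div_le_div_right hab)
        (ih ((b+1)/2) (by omega) _ (Nat.div_le_div_right hab))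

lemma gsucc (m : ℕ) : g (m+1) = g m + (m + d m) := by
  have h : (m+1).choose 2 = m.choose 2 + m := by
    rw [Nat.choose_succ_succ]; simp [Nat.choose_one_right]; omega
  simp only [g, f, h]; omega

lemma fkey (n : ℕ) : f (n+1) = f n + d n := by rw [f]

lemma fg : ∀ m, f (2*m) = g m + g m ∧ f (2*m+1) = g m + g (m+1) := by
  intro m
  induction m with
  | zero => simp [f, d, g]
  | succ m ih =>
    have h1 : d (2*m+1) = m + d m := by
      rw [d]
      have : (2*m+1)/2 = m := by omega
      rw [this]
    have h2 : d (2*m+2) = (m+1) + d (m+1) := by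
      rw [show (2*m+2) = (2*m+1)+1 by ring, d]
      have : (2*m+1+1)/2 = m+1 := by omega
      rw [this]
    have e1 := fkey (2*m+1)
    have e2 := fkey (2*m+2)
    have g1 := gsucc m
    have g2 := gsucc (m+1)
    have o1 : 2*(m+1) = 2*m+1+1 := by ring
    rw [o1]
    rw [show 2*m+1+1 = 2*m+2 by ring] at e1 ⊢
    obtain ⟨ih1, ih2⟩ := ih
    omega

lemma split0 : ∀ k a, 1 ≤ a → f (a + (a+k)) ≤ g a + g (a+k) ∧
    (g a + g (a+k) = f (a + (a+k)) ↔ k ≤ 1) := by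
  intro k
  induction k using Nat.strong_induction_on with
  | _ k ih =>
    intro a ha
    match k with
    | 0 =>
      have := (fg a).1
      rw [show a + (a+0) = 2*a by ring, show a + 0 = a by ring]
      omega
    | 1 =>
      have := (fg a).2
      rw [show a + (a+1) = 2*a+1 by ring]
      omega
    | j+2 =>
      have hih := ih j (by omega) (a+1) (by omega)
      have hd : d a ≤ d (a+j+1) := d_mono _ _ (by omega)
      have hg1 : g (a+(j+2)) = g (a+j+1) + ((a+j+1) + d (a+j+1)) := by
        rw [show a+(j+2) = (a+j+1)+1 by ring]; exact gsucc _
      have hg2 : g (a+1) = g a + (a + d a) := gsucc a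
      rw [show (a+1) + (a+1+j) = a + (a+(j+2)) by ring,
          show a+1+j = a+j+1 by ring] at hih
      constructor
      · omega
      · constructor
        · intro h; omega
        · omega

lemma split' (x y : ℕ) (hx : 1 ≤ x) (hy : 1 ≤ y) :
    f (x+y) ≤ g x + g y ∧ (g x + g y = f (x+y) ↔ (x ≤ y+1 ∧ y ≤ x+1)) := by
  rcases le_total x y with h | h
  · obtain ⟨k, rfl⟩ := Nat.exists_eq_add_of_le h
    have := split0 k x hx
    constructor
    · exact this.1
    · rw [this.2]; omega
  · obtain ⟨k, rfl⟩ := Nat.exists_eq_add_of_le h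
    have := split0 k y hy
    rw [show y+k+y = y+(y+k) by ring, Nat.add_comm (g (y+k)) (g y)]
    constructor
    · exact this.1
    · rw [this.2]; omega

end PhiAux

end PhiAuxSec

namespace PTree
open PhiAux

lemma leaves_pair (a b : PTree) : (PTree.node [a,b]).leaves = a.leaves ++ b.leaves := by
  rw [leaves]; simp [List.attach]

lemma cophen_pair (a b : PTree) (i j : ℕ) : (PTree.node [a,b]).cophen i j =
    (if i ∈ a.leaves ∧ j ∈ a.leaves then 1 + a.cophen i j else 0) +
    (if i ∈ b.leaves ∧ j ∈ b.leaves then 1 + b.cophen i j else 0) := by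
  rw [cophen]; simp [List.attach]

lemma ptree_ind (P : PTree → Prop) (hleaf : ∀ i, P (.leaf i))
    (hnode : ∀ ts, (∀ t ∈ ts, P t) → P (.node ts)) : ∀ T, P T
  | .leaf i => hleaf i
  | .node ts => hnode ts (fun t ht => ptree_ind P hleaf hnode t)
decreasing_by have := List.sizeOf_lt_of_mem ht; simp_wf; omega

lemma leaves_length_pos : ∀ T : PTree, IsBinary T → 1 ≤ T.leaves.length := by
  refine ptree_ind _ ?_ ?_
  · intro i _; simp [leaves]
  · intro ts ih hb
    rw [IsBinary] at hb
    obtain ⟨a, b, rfl⟩ := List.length_eq_two.mp hb.1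
    have ha : IsBinary a := hb.2 ⟨a, by simp⟩ (List.mem_attach _ _)
    have := ih a (by simp) ha
    rw [leaves_pair]
    simp; omega

lemma pairs_count (s : Finset ℕ) :
    (∑ i ∈ s, ∑ j ∈ s, if i < j then 1 else 0) = s.card.choose 2 := by
  induction s using Finset.induction_on_max with
  | empty => simp
  | insert a s hmax ih =>
    have hna : a ∉ s := fun h => lt_irrefl a (hmax a h)
    rw [Finset.sum_insert hna]
    have row_a : (∑ j ∈ insert a s, if a < j then 1 else 0) = 0 := by
      apply Finset.sum_eq_zero
      intro j hj
      rcases Finset.mem_insert.mp hj with rfl | hj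
      · simp
      · simp [Nat.not_lt.mpr (le_of_lt (hmax j hj))]
    have rows : ∀ i ∈ s, (∑ j ∈ insert a s, if i < j then 1 else 0)
        = 1 + ∑ j ∈ s, if i < j then 1 else 0 := by
      intro i hi
      rw [Finset.sum_insert hna, if_pos (hmax i hi)]
    rw [row_a, Finset.sum_congr rfl rows, Finset.sum_add_distrib, ih,
        Finset.card_insert_of_notMem hna]
    simp [Nat.choose_succ_succ, Nat.choose_one_right]

lemma phi_pair (a b : PTree) (hn : ((PTree.node [a,b]).leaves).Nodup) :
    Phi (PTree.node [a,b]) = Phi a + Phi b +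
      (a.leaves.length.choose 2) + (b.leaves.length.choose 2) := by
  rw [leaves_pair] at hn
  have hna : a.leaves.Nodup := hn.of_append_left
  have hnb : b.leaves.Nodup := hn.of_append_right
  have hdisj : ∀ x, x ∈ a.leaves → x ∉ b.leaves := fun x hx hy =>
    (List.disjoint_of_nodup_append hn) hx hy
  have hAB : Disjoint a.leaves.toFinset b.leaves.toFinset := by
    rw [Finset.disjoint_left]
    intro x hx hy
    exact hdisj x (List.mem_toFinset.mp hx) (List.mem_toFinset.mp hy)
  have hS : (PTree.node [a,b]).leaves.toFinset
      = a.leaves.toFinset ∪ b.leaves.toFinset := by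
    rw [leaves_pair]; simp
  -- pointwise values
  have vA : ∀ i ∈ a.leaves.toFinset, ∀ j ∈ a.leaves.toFinset,
      (PTree.node [a,b]).cophen i j = 1 + a.cophen i j := by
    intro i hi j hj
    rw [List.mem_toFinset] at hi hj
    rw [cophen_pair, if_pos ⟨hi, hj⟩, if_neg (fun h => hdisj i hi h.1)]
    omega
  have vB : ∀ i ∈ b.leaves.toFinset, ∀ j ∈ b.leaves.toFinset,
      (PTree.node [a,b]).cophen i j = 1 + b.cophen i j := by
    intro i hi j hj
    rw [List.mem_toFinset] at hi hj
    rw [cophen_pair, if_neg (fun h => hdisj i h.1 hi), if_pos ⟨hi, hj⟩]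
    omega
  have vAB : ∀ i ∈ a.leaves.toFinset, ∀ j ∈ b.leaves.toFinset,
      (PTree.node [a,b]).cophen i j = 0 := by
    intro i hi j hj
    rw [List.mem_toFinset] at hi hj
    rw [cophen_pair, if_neg (fun h => hdisj j h.2 hj), if_neg (fun h => hdisj i hi h.1)]
  have vBA : ∀ i ∈ b.leaves.toFinset, ∀ j ∈ a.leaves.toFinset,
      (PTree.node [a,b]).cophen i j = 0 := by
    intro i hi j hj
    rw [List.mem_toFinset] at hi hj
    rw [cophen_pair, if_neg (fun h => hdisj i h.1 hi), if_neg (fun h => hdisj j hj h.2)]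
  have cardA : a.leaves.toFinset.card = a.leaves.length := List.toFinset_card_of_nodup hna
  have cardB : b.leaves.toFinset.card = b.leaves.length := List.toFinset_card_of_nodup hnb
  rw [Phi, hS]
  rw [Finset.sum_union hAB]
  have inner : ∀ (i : ℕ),
      (∑ j ∈ a.leaves.toFinset ∪ b.leaves.toFinset,
        if i < j then (PTree.node [a,b]).cophen i j else 0)
      = (∑ j ∈ a.leaves.toFinset, if i < j then (PTree.node [a,b]).cophen i j else 0)
      + (∑ j ∈ b.leaves.toFinset, if i < j then (PTree.node [a,b]).cophen i j else 0) :=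
    fun i => Finset.sum_union hAB
  rw [Finset.sum_congr rfl (fun i _ => inner i), Finset.sum_congr rfl (fun i _ => inner i)]
  rw [Finset.sum_add_distrib, Finset.sum_add_distrib]
  have zAB : (∑ i ∈ a.leaves.toFinset, ∑ j ∈ b.leaves.toFinset,
      if i < j then (PTree.node [a,b]).cophen i j else 0) = 0 := by
    apply Finset.sum_eq_zero; intro i hi
    apply Finset.sum_eq_zero; intro j hj
    rw [vAB i hi j hj]; simp
  have zBA : (∑ i ∈ b.leaves.toFinset, ∑ j ∈ a.leaves.toFinset,
      if i < j then (PTree.node [a,b]).cophen i j else 0) = 0 := by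
    apply Finset.sum_eq_zero; intro i hi
    apply Finset.sum_eq_zero; intro j hj
    rw [vBA i hi j hj]; simp
  have sA : (∑ i ∈ a.leaves.toFinset, ∑ j ∈ a.leaves.toFinset,
      if i < j then (PTree.node [a,b]).cophen i j else 0)
      = Phi a + a.leaves.length.choose 2 := by
    have : ∀ i ∈ a.leaves.toFinset, ∀ j ∈ a.leaves.toFinset,
        (if i < j then (PTree.node [a,b]).cophen i j else 0)
        = (if i < j then 1 else 0) + (if i < j then a.cophen i j else 0) := by
      intro i hi j hj
      rw [vA i hi j hj]
      split_ifs <;> simp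
    rw [Finset.sum_congr rfl (fun i hi => Finset.sum_congr rfl (fun j hj => this i hi j hj))]
    simp only [Finset.sum_add_distrib]
    rw [pairs_count, cardA, Phi]
    omega
  have sB : (∑ i ∈ b.leaves.toFinset, ∑ j ∈ b.leaves.toFinset,
      if i < j then (PTree.node [a,b]).cophen i j else 0)
      = Phi b + b.leaves.length.choose 2 := by
    have : ∀ i ∈ b.leaves.toFinset, ∀ j ∈ b.leaves.toFinset,
        (if i < j then (PTree.node [a,b]).cophen i j else 0)
        = (if i < j then 1 else 0) + (if i < j then b.cophen i j else 0) := by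
      intro i hi j hj
      rw [vB i hi j hj]
      split_ifs <;> simp
    rw [Finset.sum_congr rfl (fun i hi => Finset.sum_congr rfl (fun j hj => this i hi j hj))]
    simp only [Finset.sum_add_distrib]
    rw [pairs_count, cardB, Phi]
    omega
  rw [sA, sB, zAB, zBA]
  omega

lemma phi_spec : ∀ T : PTree, IsBinary T → T.leaves.Nodup →
    PhiAux.f T.leaves.length ≤ Phi T ∧
      (Phi T = PhiAux.f T.leaves.length ↔ MaxBalanced T) := by
  refine ptree_ind _ ?_ ?_
  · intro i _ _
    have h1 : (PTree.leaf i).leaves = [i] := by rw [leaves]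
    have h2 : Phi (PTree.leaf i) = 0 := by
      rw [Phi, h1]
      simp [cophen]
    rw [h1, h2]
    simp [PhiAux.f, PhiAux.d, MaxBalanced]
  · intro ts ih hbin hnd
    rw [IsBinary] at hbin
    obtain ⟨a, b, rfl⟩ := List.length_eq_two.mp hbin.1
    have hba : IsBinary a := hbin.2 ⟨a, by simp⟩ (List.mem_attach _ _)
    have hbb : IsBinary b := hbin.2 ⟨b, by simp⟩ (List.mem_attach _ _)
    have hlp := leaves_pair a b
    have hnda : a.leaves.Nodup := by rw [hlp] at hnd; exact hnd.of_append_left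
    have hndb : b.leaves.Nodup := by rw [hlp] at hnd; exact hnd.of_append_right
    have iha := ih a (by simp) hba hnda
    have ihb := ih b (by simp) hbb hndb
    have hka : 1 ≤ a.leaves.length := leaves_length_pos a hba
    have hkb : 1 ≤ b.leaves.length := leaves_length_pos b hbb
    have hphi := phi_pair a b hnd
    have hlen : (PTree.node [a,b]).leaves.length = a.leaves.length + b.leaves.length := by
      rw [hlp, List.length_append]
    have hsp := PhiAux.split' a.leaves.length b.leaves.length hka hkb
    have hmb : MaxBalanced (PTree.node [a,b]) ↔
        (a.leaves.length ≤ b.leaves.length + 1 ∧ b.leaves.length ≤ a.leaves.length + 1)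
        ∧ MaxBalanced a ∧ MaxBalanced b := by
      rw [MaxBalanced]
      constructor
      · rintro ⟨h1, h2, h3⟩
        rw [abs_le] at h1
        refine ⟨⟨?_, ?_⟩, h2, h3⟩ <;> omega
      · rintro ⟨⟨h1, h2⟩, h3, h4⟩
        refine ⟨?_, h3, h4⟩
        rw [abs_le]
        constructor <;> push_cast <;> omega
    rw [hlen, hphi, hmb, ← iha.2, ← ihb.2]
    have gA : PhiAux.g a.leaves.length
        = PhiAux.f a.leaves.length + a.leaves.length.choose 2 := rfl
    have gB : PhiAux.g b.leaves.length
        = PhiAux.f b.leaves.length + b.leaves.length.choose 2 := rfl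
    obtain ⟨s1, s2⟩ := hsp
    constructor
    · omega
    · rw [← s2]
      omega

lemma proper_pair (a b : PTree) (ha : Proper a) (hb : Proper b) :
    Proper (PTree.node [a, b]) := by
  rw [Proper]
  constructor
  · simp
  · intro t ht
    have h := t.2
    simp only [List.mem_cons, List.not_mem_nil, or_false, List.mem_singleton] at h
    rcases h with h | h <;> rw [h]
    · exact ha
    · exact hb

lemma binary_pair (a b : PTree) (ha : IsBinary a) (hb : IsBinary b) :
    IsBinary (PTree.node [a, b]) := by
  rw [IsBinary]
  constructor
  · simp
  · intro t ht
    have h := t.2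
    simp only [List.mem_cons, List.not_mem_nil, or_false, List.mem_singleton] at h
    rcases h with h | h <;> rw [h]
    · exact ha
    · exact hb

def bal : ℕ → ℕ → PTree
  | _, 0 => .leaf 1
  | a, 1 => .leaf (a+1)
  | a, n+2 => .node [bal a ((n+3)/2), bal (a + (n+3)/2) ((n+2)/2)]
termination_by _ n => n
decreasing_by all_goals omega

lemma bal_one (a : ℕ) : bal a 1 = .leaf (a+1) := by simp only [bal]

lemma bal_two (a n : ℕ) :
    bal a (n+2) = .node [bal a ((n+3)/2), bal (a + (n+3)/2) ((n+2)/2)] := by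
  simp only [bal]

lemma bal_leaves : ∀ n a, 1 ≤ n → (bal a n).leaves = List.range' (a+1) n := by
  intro n
  induction n using Nat.strong_induction_on with
  | _ n ih =>
    intro a _
    match n with
    | 1 => rw [bal_one, leaves]; simp
    | n+2 =>
      rw [bal_two, leaves_pair, ih ((n+3)/2) (by omega) a (by omega),
          ih ((n+2)/2) (by omega) (a + (n+3)/2) (by omega)]
      rw [show a + (n+3)/2 + 1 = (a+1) + 1*((n+3)/2) by ring]
      rw [List.range'_append]
      congr 1
      omega

lemma bal_binary : ∀ n a, 1 ≤ n → IsBinary (bal a n) := by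
  intro n
  induction n using Nat.strong_induction_on with
  | _ n ih =>
    intro a _
    match n with
    | 1 => rw [bal_one, IsBinary]; trivial
    | n+2 =>
      rw [bal_two]
      exact binary_pair _ _ (ih ((n+3)/2) (by omega) a (by omega))
        (ih ((n+2)/2) (by omega) _ (by omega))

lemma bal_proper : ∀ n a, 1 ≤ n → Proper (bal a n) := by
  intro n
  induction n using Nat.strong_induction_on with
  | _ n ih =>
    intro a _
    match n with
    | 1 => rw [bal_one, Proper]; trivial
    | n+2 =>
      rw [bal_two]
      exact proper_pair _ _ (ih ((n+3)/2) (by omega) a (by omega))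
        (ih ((n+2)/2) (by omega) _ (by omega))

lemma bal_maxbal : ∀ n a, 1 ≤ n → MaxBalanced (bal a n) := by
  intro n
  induction n using Nat.strong_induction_on with
  | _ n ih =>
    intro a _
    match n with
    | 1 => rw [bal_one, MaxBalanced]; trivial
    | n+2 =>
      rw [bal_two, MaxBalanced]
      refine ⟨?_, ih ((n+3)/2) (by omega) a (by omega), ih ((n+2)/2) (by omega) _ (by omega)⟩
      rw [bal_leaves ((n+3)/2) a (by omega), bal_leaves ((n+2)/2) _ (by omega)]
      simp only [List.length_range']
      rw [abs_le]
      constructor <;> push_cast <;> omega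

lemma bal_phylo (n : ℕ) (hn : 1 ≤ n) : IsPhylo n (bal 0 n) := by
  refine ⟨bal_proper n 0 hn, ?_, ?_⟩
  · rw [bal_leaves n 0 hn]; exact List.nodup_range' ..
  · rw [bal_leaves n 0 hn]
    ext x
    simp only [List.mem_toFinset, List.mem_range'_1, Finset.mem_Icc]
    omega

end PTree

theorem phi_min_iff_maximally_balanced (n : ℕ) (T : PTree)
    (hT : PTree.IsPhylo n T) (hb : PTree.IsBinary T) :
    (∀ T', PTree.IsPhylo n T' → PTree.IsBinary T' → PTree.Phi T ≤ PTree.Phi T') ↔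
      PTree.MaxBalanced T := by
  obtain ⟨hp, hnd, hfin⟩ := hT
  have hlen : T.leaves.length = n := by
    rw [← List.toFinset_card_of_nodup hnd, hfin, Nat.card_Icc]; omega
  have hpos := PTree.leaves_length_pos T hb
  have hn1 : 1 ≤ n := by omega
  have spec := PTree.phi_spec T hb hnd
  rw [hlen] at spec
  have bal_len : (PTree.bal 0 n).leaves.length = n := by
    rw [PTree.bal_leaves n 0 hn1, List.length_range']
  have bspec := PTree.phi_spec (PTree.bal 0 n) (PTree.bal_binary n 0 hn1)
      (by rw [PTree.bal_leaves n 0 hn1]; exact List.nodup_range' ..)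
  rw [bal_len] at bspec
  have bphi : PTree.Phi (PTree.bal 0 n) = PhiAux.f n :=
    bspec.2.mpr (PTree.bal_maxbal n 0 hn1)
  constructor
  · intro hmin
    have h1 := hmin (PTree.bal 0 n) (PTree.bal_phylo n hn1) (PTree.bal_binary n 0 hn1)
    exact spec.2.mp (by omega)
  · intro hmb T' hT' hb'
    have hnd' := hT'.2.1
    have hlen' : T'.leaves.length = n := by
      rw [← List.toFinset_card_of_nodup hnd', hT'.2.2, Nat.card_Icc]; omega
    have spec' := PTree.phi_spec T' hb' hnd'
    rw [hlen'] at spec'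
    have := spec.2.mpr hmb
    omega
end

section
/- Define f(1) = f(2) = 0 and f(n) = f(⌈n/2⌉) + f(⌊n/2⌋) + binom(⌈n/2⌉,2) + binom(⌊n/2⌋,2) for n ≥ 3, and let a(m) be the exponent of 2 in m! (the highest power of 2 dividing m!). Then for every n ≥ 1, f(n) = Σ_{k=0}^{n−1} a(k). -/
lemma val_rec (n : ℕ) :
    padicValNat 2 n.factorial = n / 2 + padicValNat 2 ((n / 2).factorial) := by
  haveI : Fact (Nat.Prime 2) := ⟨Nat.prime_two⟩
  set c := Nat.log 2 n with hc
  have h1 : padicValNat 2 n.factorial = ∑ i ∈ Finset.Ico 1 (c + 2), n / 2 ^ i :=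
    padicValNat_factorial (by omega)
  have h2 : padicValNat 2 ((n / 2).factorial) = ∑ i ∈ Finset.Ico 1 (c + 1), (n / 2) / 2 ^ i :=
    padicValNat_factorial (by
      have := Nat.log_mono_right (b := 2) (Nat.div_le_self n 2)
      omega)
  rw [h1, h2, Finset.sum_Ico_eq_sum_range, Finset.sum_Ico_eq_sum_range]
  simp only [Nat.add_sub_cancel, show c + 2 - 1 = c + 1 by omega]
  rw [Finset.sum_range_succ']
  have key : ∀ i : ℕ, n / 2 ^ (1 + (i + 1)) = n / 2 / 2 ^ (1 + i) := by
    intro i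
    rw [Nat.div_div_eq_div_mul, ← pow_succ']; ring_nf
  simp only [key, pow_one]
  omega

noncomputable def gg (n : ℕ) : ℕ := ∑ k ∈ Finset.range n, padicValNat 2 (Nat.factorial k)

lemma sum_halves (n : ℕ) :
    ∑ k ∈ Finset.range n, k / 2 = Nat.choose ((n + 1) / 2) 2 + Nat.choose (n / 2) 2 := by
  induction n with
  | zero => simp
  | succ n ih =>
      rw [Finset.sum_range_succ, ih]
      rw [show (n + 1 + 1) / 2 = n / 2 + 1 by omega]
      have h2 : (n / 2 + 1).choose 2 = n / 2 + (n / 2).choose 2 := by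
        rw [show n / 2 + 1 = (n/2).succ from rfl, Nat.choose_succ_succ]
        simp [Nat.choose_one_right]
      omega

lemma sum_val_halves (n : ℕ) :
    ∑ k ∈ Finset.range n, padicValNat 2 (Nat.factorial (k / 2)) = gg ((n + 1) / 2) + gg (n / 2) := by
  induction n with
  | zero => simp [gg]
  | succ n ih =>
      rw [Finset.sum_range_succ, ih]
      rcases Nat.even_or_odd n with ⟨m, hm⟩ | ⟨m, hm⟩
      · have e1 : (n + 1 + 1) / 2 = m + 1 := by omega
        have e2 : (n + 1) / 2 = m := by omega
        have e3 : n / 2 = m := by omega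
        rw [e1, e2, e3]
        have : gg (m + 1) = gg m + padicValNat 2 (Nat.factorial m) := by
          simp [gg, Finset.sum_range_succ]
        omega
      · have e1 : (n + 1 + 1) / 2 = m + 1 := by omega
        have e2 : (n + 1) / 2 = m + 1 := by omega
        have e3 : n / 2 = m := by omega
        rw [e1, e2, e3]
        have : gg (m + 1) = gg m + padicValNat 2 (Nat.factorial m) := by
          simp [gg, Finset.sum_range_succ]
        omega

lemma gg_rec (n : ℕ) :
    gg n = gg ((n + 1) / 2) + gg (n / 2) +
      Nat.choose ((n + 1) / 2) 2 + Nat.choose (n / 2) 2 := by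
  have : gg n = ∑ k ∈ Finset.range n, (k / 2 + padicValNat 2 (Nat.factorial (k / 2))) := by
    unfold gg
    exact Finset.sum_congr rfl fun k _ => val_rec k
  rw [this, Finset.sum_add_distrib, sum_halves, sum_val_halves]
  ring

theorem min_phi_eq_sum_two_adic_valuations (f : ℕ → ℕ)
    (h1 : f 1 = 0) (h2 : f 2 = 0)
    (hrec : ∀ n, 3 ≤ n →
      f n = f ((n + 1) / 2) + f (n / 2) +
        Nat.choose ((n + 1) / 2) 2 + Nat.choose (n / 2) 2) :
    ∀ n, 1 ≤ n → f n = ∑ k ∈ Finset.range n, padicValNat 2 (Nat.factorial k) := by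
  have hgg : ∀ n, 1 ≤ n → f n = gg n := by
    intro n
    induction n using Nat.strong_induction_on with
    | _ n ih =>
        intro hn
        match n, hn with
        | 1, _ => simpa [gg] using h1
        | 2, _ =>
            rw [h2, gg]
            simp [Finset.sum_range_succ, Nat.factorial]
        | (m + 3), _ =>
            rw [hrec (m + 3) (by omega), gg_rec (m + 3),
              ih ((m + 3 + 1) / 2) (by omega) (by omega),
              ih ((m + 3) / 2) (by omega) (by omega)]
  exact fun n hn => hgg n hn
end
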